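/- Suppose an LME M(y) = M0 + Σ_{j=1}^k Mj*yj is closed under multiplication (i.e., M(y)^n is an LME for every n ≥ 1, with the support conditions of Definition: supp(M0)² ≤ supp(M0), supp(M0)·supp(Mj) ≤ supp(Mj), supp(Mj)·supp(M0) ≤ supp(Mj), supp(Mj)·supp(Ml) = 0 for j,l ≥ 1). Then the matrix exponential exp(M(γ)) is an affine function of γ: there exist matrices Q0, Q1, ..., Qk such that for every valuation γ ∈ ℝ^k, exp(M0 + Σj Mj*γj) = Q0 + Σj Qj*γj. -/

import Mathlib

open Matrix
open scoped Nat

noncomputable def supp {n : ℕ} (M : Matrix (Fin n) (Fin n) ℝ) : Matrix (Fin n) (Fin n) Bool :=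
  fun i j => decide (M i j ≠ 0)

def bmul {n : ℕ} (A B : Matrix (Fin n) (Fin n) Bool) : Matrix (Fin n) (Fin n) Bool :=
  fun i j => decide (∃ l, A i l = true ∧ B l j = true)

def ble {n : ℕ} (A B : Matrix (Fin n) (Fin n) Bool) : Prop :=
  ∀ i j, B i j = false → A i j = false

lemma supp_eq_false {n : ℕ} {M : Matrix (Fin n) (Fin n) ℝ} {i j : Fin n} :
    supp M i j = false ↔ M i j = 0 := by
  simp [supp]

lemma bmul_eq_false {n : ℕ} {A B : Matrix (Fin n) (Fin n) Bool} {i j : Fin n} :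
    bmul A B i j = false ↔ ∀ l, A i l = true → B l j = false := by
  simp [bmul]

/-- Support propagation: if `supp Mj i p` is false then `(Mj * A ^ b) i p = 0`. -/
lemma mul_pow_eq_zero {n : ℕ} {A Mj : Matrix (Fin n) (Fin n) ℝ}
    (h : ble (bmul (supp Mj) (supp A)) (supp Mj)) :
    ∀ (b : ℕ) (i p : Fin n), supp Mj i p = false → (Mj * A ^ b) i p = 0 := by
  intro b
  induction b with
  | zero =>
    intro i p hip
    simpa [Matrix.mul_one] using supp_eq_false.mp hip
  | succ b ih =>
    intro i p hip
    have hrw : Mj * A ^ (b + 1) = Mj * A ^ b * A := by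
      rw [pow_succ, ← mul_assoc]
    rw [hrw, Matrix.mul_apply]
    apply Finset.sum_eq_zero
    intro l _
    by_cases hl : supp Mj i l = false
    · rw [ih i l hl, zero_mul]
    · have hb : bmul (supp Mj) (supp A) i p = false := h i p hip
      have := bmul_eq_false.mp hb l (by simpa using hl)
      rw [supp_eq_false.mp this, mul_zero]

lemma sandwich_zero {n : ℕ} {A Mj Ml : Matrix (Fin n) (Fin n) ℝ}
    (h2 : ble (bmul (supp Mj) (supp A)) (supp Mj))
    (h3 : bmul (supp Mj) (supp Ml) = fun _ _ => false) (b : ℕ) :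
    Mj * A ^ b * Ml = 0 := by
  ext i q
  rw [Matrix.mul_apply, Matrix.zero_apply]
  apply Finset.sum_eq_zero
  intro p _
  by_cases hp : supp Mj i p = false
  · rw [mul_pow_eq_zero h2 b i p hp, zero_mul]
  · have hbm : bmul (supp Mj) (supp Ml) i q = false := by rw [h3]
    have := bmul_eq_false.mp hbm p (by simpa using hp)
    rw [supp_eq_false.mp this, mul_zero]

lemma pow_add_expand {n : ℕ} {A N : Matrix (Fin n) (Fin n) ℝ}
    (hN : ∀ b : ℕ, N * A ^ b * N = 0) (m : ℕ) :
    (A + N) ^ m = A ^ m + ∑ a ∈ Finset.range m, A ^ a * N * A ^ (m - 1 - a) := by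
  induction m with
  | zero => simp
  | succ m ih =>
    rw [pow_succ, ih, add_mul, mul_add, mul_add]
    have hTN : (∑ a ∈ Finset.range m, A ^ a * N * A ^ (m - 1 - a)) * N = 0 := by
      rw [Finset.sum_mul]
      apply Finset.sum_eq_zero
      intro a _
      calc A ^ a * N * A ^ (m - 1 - a) * N
          = A ^ a * (N * A ^ (m - 1 - a) * N) := by
            simp only [mul_assoc]
        _ = 0 := by rw [hN, mul_zero]
    have hTA : (∑ a ∈ Finset.range m, A ^ a * N * A ^ (m - 1 - a)) * A
        = ∑ a ∈ Finset.range m, A ^ a * N * A ^ (m - a) := by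
      rw [Finset.sum_mul]
      refine Finset.sum_congr rfl fun a ha => ?_
      have ham : m - 1 - a + 1 = m - a := by
        have := Finset.mem_range.mp ha; omega
      rw [mul_assoc, ← pow_succ, ham]
    rw [hTN, hTA]
    have hrs : ∑ a ∈ Finset.range (m + 1), A ^ a * N * A ^ (m + 1 - 1 - a)
        = (∑ a ∈ Finset.range m, A ^ a * N * A ^ (m - a)) + A ^ m * N := by
      rw [Finset.sum_range_succ]
      simp
    rw [hrs, ← pow_succ]
    abel

theorem exp_of_closed_lme_is_affine {n k : ℕ}
    (M0 : Matrix (Fin n) (Fin n) ℝ) (M : Fin k → Matrix (Fin n) (Fin n) ℝ)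
    (h0 : ble (bmul (supp M0) (supp M0)) (supp M0))
    (h1 : ∀ j, ble (bmul (supp M0) (supp (M j))) (supp (M j)))
    (h2 : ∀ j, ble (bmul (supp (M j)) (supp M0)) (supp (M j)))
    (h3 : ∀ j l, bmul (supp (M j)) (supp (M l)) = fun _ _ => false) :
    ∃ (Q0 : Matrix (Fin n) (Fin n) ℝ) (Q : Fin k → Matrix (Fin n) (Fin n) ℝ),
      ∀ γ : Fin k → ℝ,
        NormedSpace.exp (M0 + ∑ j, γ j • M j) = Q0 + ∑ j, γ j • Q j := by
  classical
  letI : SeminormedRing (Matrix (Fin n) (Fin n) ℝ) := Matrix.linftyOpSemiNormedRing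
  letI : NormedRing (Matrix (Fin n) (Fin n) ℝ) := Matrix.linftyOpNormedRing
  letI : NormedAlgebra ℝ (Matrix (Fin n) (Fin n) ℝ) := Matrix.linftyOpNormedAlgebra
  -- summability of the linear part of the series
  have hsum : ∀ X : Matrix (Fin n) (Fin n) ℝ,
      Summable (fun m : ℕ =>
        ((m ! : ℝ))⁻¹ • ∑ a ∈ Finset.range m, M0 ^ a * X * M0 ^ (m - 1 - a)) := by
    intro X
    set C : ℝ := ‖(1 : Matrix (Fin n) (Fin n) ℝ)‖ + 1 with hC
    set D : ℝ := ‖M0‖ + 1 with hD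
    have hC1 : 1 ≤ C := by
      have := norm_nonneg (1 : Matrix (Fin n) (Fin n) ℝ); rw [hC]; linarith
    have hD1 : 1 ≤ D := by
      have := norm_nonneg M0; rw [hD]; linarith
    have hCpos : 0 < C := by linarith
    have hDpos : 0 < D := by linarith
    have hpow : ∀ a : ℕ, ‖M0 ^ a‖ ≤ C * D ^ a := by
      intro a
      induction a with
      | zero =>
        simp only [pow_zero, mul_one]
        rw [hC]; linarith
      | succ a ih =>
        calc ‖M0 ^ (a + 1)‖ = ‖M0 ^ a * M0‖ := by rw [pow_succ]
          _ ≤ ‖M0 ^ a‖ * ‖M0‖ := norm_mul_le _ _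
          _ ≤ (C * D ^ a) * D :=
            mul_le_mul ih (by rw [hD]; linarith [norm_nonneg M0]) (norm_nonneg _) (by positivity)
          _ = C * D ^ (a + 1) := by ring
    have hTb : ∀ m : ℕ, ‖∑ a ∈ Finset.range m, M0 ^ a * X * M0 ^ (m - 1 - a)‖
        ≤ m * (C ^ 2 * ‖X‖ * D ^ m) := by
      intro m
      calc ‖∑ a ∈ Finset.range m, M0 ^ a * X * M0 ^ (m - 1 - a)‖
          ≤ ∑ a ∈ Finset.range m, ‖M0 ^ a * X * M0 ^ (m - 1 - a)‖ := norm_sum_le _ _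
        _ ≤ ∑ _a ∈ Finset.range m, C ^ 2 * ‖X‖ * D ^ m := by
            refine Finset.sum_le_sum fun a ha => ?_
            have hDab : D ^ a * D ^ (m - 1 - a) ≤ D ^ m := by
              rw [← pow_add]
              have ham := Finset.mem_range.mp ha
              exact pow_le_pow_right₀ hD1 (by omega)
            calc ‖M0 ^ a * X * M0 ^ (m - 1 - a)‖
                ≤ ‖M0 ^ a * X‖ * ‖M0 ^ (m - 1 - a)‖ := norm_mul_le _ _
              _ ≤ (‖M0 ^ a‖ * ‖X‖) * ‖M0 ^ (m - 1 - a)‖ :=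
                  mul_le_mul_of_nonneg_right (norm_mul_le _ _) (norm_nonneg _)
              _ ≤ ((C * D ^ a) * ‖X‖) * (C * D ^ (m - 1 - a)) := by
                  refine mul_le_mul ?_ (hpow _) (norm_nonneg _) (by positivity)
                  exact mul_le_mul_of_nonneg_right (hpow a) (norm_nonneg _)
              _ = C ^ 2 * ‖X‖ * (D ^ a * D ^ (m - 1 - a)) := by ring
              _ ≤ C ^ 2 * ‖X‖ * D ^ m :=
                  mul_le_mul_of_nonneg_left hDab (by positivity)
        _ = m * (C ^ 2 * ‖X‖ * D ^ m) := by
            rw [Finset.sum_const, Finset.card_range, nsmul_eq_mul]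
    have hg : Summable (fun m : ℕ => (C ^ 2 * ‖X‖ * D) * (D ^ (m - 1) / (m - 1)!)) := by
      apply Summable.mul_left
      rw [← summable_nat_add_iff 1]
      simpa using Real.summable_pow_div_factorial D
    refine Summable.of_norm_bounded hg ?_
    intro m
    match m with
    | 0 => simp; positivity
    | (s + 1) =>
      have hfact : ((s + 1)! : ℝ) = (s + 1) * (s ! : ℝ) := by
        rw [Nat.factorial_succ]; push_cast; ring
      have hspos : (0 : ℝ) < (s ! : ℝ) := by
        exact_mod_cast Nat.factorial_pos s
      calc ‖((s + 1)! : ℝ)⁻¹ • ∑ a ∈ Finset.range (s + 1),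
              M0 ^ a * X * M0 ^ (s + 1 - 1 - a)‖
          = ((s + 1)! : ℝ)⁻¹ * ‖∑ a ∈ Finset.range (s + 1),
              M0 ^ a * X * M0 ^ (s + 1 - 1 - a)‖ := by
            rw [norm_smul, Real.norm_eq_abs, abs_of_nonneg (by positivity)]
        _ ≤ ((s + 1)! : ℝ)⁻¹ * ((((s : ℕ) + 1 : ℕ) : ℝ) * (C ^ 2 * ‖X‖ * D ^ (s + 1))) :=
            mul_le_mul_of_nonneg_left (hTb (s + 1)) (by positivity)
        _ = (C ^ 2 * ‖X‖ * D) * (D ^ (s + 1 - 1) / (s + 1 - 1)!) := by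
            simp only [Nat.add_sub_cancel]
            rw [hfact]
            field_simp
            push_cast
            ring
    -- end hsum
  -- the sandwich property for N = ∑ γ j • M j
  have hsand : ∀ γ : Fin k → ℝ, ∀ b : ℕ,
      (∑ j, γ j • M j) * M0 ^ b * (∑ j, γ j • M j) = 0 := by
    intro γ b
    rw [Finset.sum_mul]
    rw [Finset.sum_mul]
    apply Finset.sum_eq_zero
    intro j _
    rw [smul_mul_assoc, smul_mul_assoc, Finset.mul_sum]
    rw [Finset.sum_eq_zero, smul_zero]
    intro l _
    rw [mul_smul_comm, sandwich_zero (h2 j) (h3 j l) b, smul_zero]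
  refine ⟨NormedSpace.exp M0,
    fun j => ∑' m : ℕ, ((m ! : ℝ))⁻¹ •
      ∑ a ∈ Finset.range m, M0 ^ a * M j * M0 ^ (m - 1 - a), fun γ => ?_⟩
  set N : Matrix (Fin n) (Fin n) ℝ := ∑ j, γ j • M j with hNdef
  have hexp : ∀ m : ℕ, ((m ! : ℝ))⁻¹ • (M0 + N) ^ m
      = ((m ! : ℝ))⁻¹ • M0 ^ m + ∑ j, γ j • (((m ! : ℝ))⁻¹ •
          ∑ a ∈ Finset.range m, M0 ^ a * M j * M0 ^ (m - 1 - a)) := by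
    intro m
    rw [pow_add_expand (hsand γ) m, smul_add]
    congr 1
    have hlin : (∑ a ∈ Finset.range m, M0 ^ a * N * M0 ^ (m - 1 - a))
        = ∑ j, γ j • ∑ a ∈ Finset.range m, M0 ^ a * M j * M0 ^ (m - 1 - a) := by
      simp only [hNdef, Finset.mul_sum, Finset.sum_mul, mul_smul_comm, smul_mul_assoc,
        Finset.smul_sum]
      exact Finset.sum_comm
    rw [hlin, Finset.smul_sum]
    exact Finset.sum_congr rfl fun j _ => smul_comm _ _ _
  have hsum2 : Summable (fun m : ℕ => ∑ j, γ j • (((m ! : ℝ))⁻¹ •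
      ∑ a ∈ Finset.range m, M0 ^ a * M j * M0 ^ (m - 1 - a))) := by
    exact summable_sum fun j _ => (hsum (M j)).const_smul (γ j)
  simp only [NormedSpace.exp_eq_tsum ℝ]
  calc (∑' m : ℕ, ((m ! : ℝ))⁻¹ • (M0 + N) ^ m)
      = ∑' m : ℕ, (((m ! : ℝ))⁻¹ • M0 ^ m + ∑ j, γ j • (((m ! : ℝ))⁻¹ •
          ∑ a ∈ Finset.range m, M0 ^ a * M j * M0 ^ (m - 1 - a))) :=
        tsum_congr hexp
    _ = (∑' m : ℕ, ((m ! : ℝ))⁻¹ • M0 ^ m) + ∑' m : ℕ, ∑ j, γ j • (((m ! : ℝ))⁻¹ •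
          ∑ a ∈ Finset.range m, M0 ^ a * M j * M0 ^ (m - 1 - a)) :=
        Summable.tsum_add (NormedSpace.expSeries_summable' (𝕂 := ℝ) M0) hsum2
    _ = (∑' m : ℕ, ((m ! : ℝ))⁻¹ • M0 ^ m) + ∑ j, γ j • ∑' m : ℕ, ((m ! : ℝ))⁻¹ •
          ∑ a ∈ Finset.range m, M0 ^ a * M j * M0 ^ (m - 1 - a) := by
        congr 1
        rw [Summable.tsum_finsetSum fun j _ => (hsum (M j)).const_smul (γ j)]
        exact Finset.sum_congr rfl fun j _ => Summable.tsum_const_smul _ (hsum (M j))
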